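/- Let (S_j)_{j=0}^{N-1} be a representation of the Cuntz algebra 𝒪_N on H, let f ∈ H with ‖f‖ = 1, and let μ_f be a spectral measure of f on [0,1). Then the distribution functions converge pointwise: for every x ∈ [0,1), lim_{k→∞} μ_f^{(k)}([0,x]) = μ_f([0,x]). -/

import Mathlib

open MeasureTheory ContinuousLinearMap
open scoped InnerProductSpace

variable {H : Type*} [NormedAddCommGroup H] [InnerProductSpace ℂ H] [CompleteSpace H]

/-- The word operator `S_α = S_{α 1} ⋯ S_{α k}` associated to a multi-index
`α ∈ {0,…,N-1}^k`. -/
noncomputable def Sw {N : ℕ} (S : Fin N → H →L[ℂ] H) {k : ℕ} (α : Fin k → Fin N) :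
    H →L[ℂ] H :=
  (List.ofFn fun i => S (α i)).prod

/-- A family `S_0, …, S_{N-1}` of bounded operators is a representation of the Cuntz
algebra `𝒪_N` if `S_j^* S_k = δ_{jk} I` and `∑ j, S_j S_j^* = I`. -/
def CuntzRep {N : ℕ} (S : Fin N → H →L[ℂ] H) : Prop :=
  (∀ j k : Fin N, adjoint (S j) ∘L S k = if j = k then 1 else 0) ∧
    ∑ j : Fin N, S j ∘L adjoint (S j) = 1

/-- `x_k(α) = α_1/N + α_2/N² + ⋯ + α_k/N^k`. -/
noncomputable def xk (N : ℕ) {k : ℕ} (α : Fin k → Fin N) : ℝ :=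
  ∑ i : Fin k, (α i : ℝ) / (N : ℝ) ^ ((i : ℕ) + 1)

/-- The `N`-adic interval `I_k(α) = [x_k(α), x_k(α) + N^{-k})`. -/
noncomputable def Ik (N : ℕ) {k : ℕ} (α : Fin k → Fin N) : Set ℝ :=
  Set.Ico (xk N α) (xk N α + ((N : ℝ) ^ k)⁻¹)

/-- A Borel measure `μ` on `[0,1)` is a spectral measure of `g` if `μ([0,1)) = ‖g‖²`
and `μ(I_k(α)) = ‖S_α^* g‖²` for every `k ≥ 1` and multi-index `α`. -/
def IsSpectralMeasureR {N : ℕ} (S : Fin N → H →L[ℂ] H) (g : H) (μ : Measure ℝ) : Prop :=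
  μ (Set.Ico (0:ℝ) 1)ᶜ = 0 ∧ μ Set.univ = ENNReal.ofReal (‖g‖ ^ 2) ∧
    ∀ k : ℕ, 1 ≤ k → ∀ α : Fin k → Fin N,
      μ (Ik N α) = ENNReal.ofReal (‖adjoint (Sw S α) g‖ ^ 2)

/-- The atomic measure `μ_f^{(k)} = ∑_α ‖S_α^* f‖² δ_{x_k(α)}`. -/
noncomputable def muk {N : ℕ} (S : Fin N → H →L[ℂ] H) (f : H) (k : ℕ) : Measure ℝ :=
  ∑ α : Fin k → Fin N,
    ENNReal.ofReal (‖adjoint (Sw S α) f‖ ^ 2) • Measure.dirac (xk N α)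

lemma tele_aux (μ : Measure ℝ) (q : ℝ) (hq : 0 < q) (m : ℕ) :
    ∑ n ∈ Finset.range m, μ (Set.Ico ((n : ℝ)/q) (((n : ℝ)+1)/q))
      = μ (Set.Ico (0:ℝ) ((m : ℝ)/q)) := by
  induction m with
  | zero => simp
  | succ m ih =>
    rw [Finset.sum_range_succ, ih,
      ← measure_union Set.Ico_disjoint_Ico_same measurableSet_Ico,
      Set.Ico_union_Ico_eq_Ico (by positivity) (by gcongr; linarith)]
    push_cast
    ring_nf

lemma xk_nonneg (N : ℕ) {k : ℕ} (α : Fin k → Fin N) : 0 ≤ xk N α := by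
  apply Finset.sum_nonneg; intro i _; positivity

lemma xk_eq {N : ℕ} (hN : 0 < N) {k : ℕ} (α : Fin k → Fin N) :
    xk N α = ((finFunctionFinEquiv (α ∘ Fin.rev) : ℕ) : ℝ) / (N : ℝ) ^ k := by
  have hNR : (0:ℝ) < N := by exact_mod_cast hN
  rw [finFunctionFinEquiv_apply]
  push_cast
  rw [Finset.sum_div]
  simp only [Function.comp_apply]
  rw [← Equiv.sum_comp (Fin.revPerm (n := k))
    (fun i => ((α (Fin.rev i) : ℝ) * (N : ℝ) ^ (i : ℕ)) / (N : ℝ) ^ k)]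
  unfold xk
  apply Finset.sum_congr rfl
  intro j _
  simp only [Fin.revPerm_apply, Fin.rev_rev]
  have hpow : (N : ℝ) ^ k = (N : ℝ) ^ ((Fin.rev j : ℕ)) * (N : ℝ) ^ ((j : ℕ) + 1) := by
    rw [← pow_add]
    congr 1
    have := j.is_lt
    simp [Fin.val_rev]
  rw [hpow]
  have h1 : (N : ℝ) ^ ((j : ℕ) + 1) ≠ 0 := by positivity
  have h2 : (N : ℝ) ^ ((Fin.rev j : ℕ)) ≠ 0 := by positivity
  field_simp

lemma muk_apply_eq {N : ℕ} (hN : 2 ≤ N) (S : Fin N → H →L[ℂ] H) (f : H)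
    (μ : Measure ℝ) (hμ : IsSpectralMeasureR S f μ) {x : ℝ} (hx0 : 0 ≤ x) (hx1 : x < 1)
    {k : ℕ} (hk : 1 ≤ k) :
    muk S f k (Set.Icc 0 x)
      = μ (Set.Ico (0:ℝ) (((⌊(N : ℝ) ^ k * x⌋₊ : ℝ) + 1) / (N : ℝ) ^ k)) := by
  have hN0 : 0 < N := by omega
  have hNR : (1:ℝ) < N := by exact_mod_cast hN.trans_lt' one_lt_two
  have hq : (0:ℝ) < (N : ℝ) ^ k := by positivity
  -- step 1 : expand
  have h1 : muk S f k (Set.Icc 0 x)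
      = ∑ α : Fin k → Fin N,
          (if xk N α ≤ x then μ (Ik N α) else 0) := by
    rw [muk, Measure.finset_sum_apply]
    apply Finset.sum_congr rfl
    intro α _
    rw [Measure.smul_apply, Measure.dirac_apply' _ measurableSet_Icc, smul_eq_mul,
      ← hμ.2.2 k hk α]
    rw [Set.indicator_apply]
    simp only [Set.mem_Icc, Pi.one_apply]
    by_cases hle : xk N α ≤ x
    · simp [hle, xk_nonneg N α]
    · simp [hle]
  rw [h1]
  -- step 2 : reindex by Fin (N ^ k)
  have hbij : Function.Bijective
      (fun α : Fin k → Fin N => finFunctionFinEquiv (α ∘ Fin.rev)) := by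
    have hinv : Function.Involutive (fun α : Fin k → Fin N => α ∘ Fin.rev) := by
      intro α; funext i; simp [Function.comp, Fin.rev_rev]
    exact finFunctionFinEquiv.bijective.comp hinv.bijective
  have h2 : ∑ α : Fin k → Fin N, (if xk N α ≤ x then μ (Ik N α) else 0)
      = ∑ n : Fin (N ^ k),
          (if ((n : ℕ) : ℝ) / (N : ℝ) ^ k ≤ x then
            μ (Set.Ico (((n : ℕ) : ℝ) / (N : ℝ) ^ k) ((((n : ℕ) : ℝ) + 1) / (N : ℝ) ^ k)) else 0) := by
    apply Fintype.sum_bijective _ hbij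
    intro α
    have hx := xk_eq hN0 α
    have e2 : xk N α + ((N : ℝ) ^ k)⁻¹
        = (((finFunctionFinEquiv (α ∘ Fin.rev) : ℕ) : ℝ) + 1) / (N : ℝ) ^ k := by
      rw [hx, inv_eq_one_div, ← add_div]
    rw [Ik, e2, hx]
  rw [h2]
  -- step 3 : to a range sum
  rw [Fin.sum_univ_eq_sum_range (fun n : ℕ =>
    (if ((n : ℕ) : ℝ) / (N : ℝ) ^ k ≤ x then
      μ (Set.Ico (((n : ℕ) : ℝ) / (N : ℝ) ^ k) ((((n : ℕ) : ℝ) + 1) / (N : ℝ) ^ k)) else 0))]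
  have hMlt : ⌊(N : ℝ) ^ k * x⌋₊ + 1 ≤ N ^ k := by
    have : ⌊(N : ℝ) ^ k * x⌋₊ < N ^ k := by
      rw [Nat.floor_lt (by positivity)]
      calc (N : ℝ) ^ k * x < (N : ℝ) ^ k * 1 := by
            exact mul_lt_mul_of_pos_left hx1 hq
        _ = ((N ^ k : ℕ) : ℝ) := by push_cast; ring
    omega
  have hcond : ∀ n : ℕ, ((n : ℝ) / (N : ℝ) ^ k ≤ x ↔ n ≤ ⌊(N : ℝ) ^ k * x⌋₊) := by
    intro n
    rw [div_le_iff₀ hq, Nat.le_floor_iff (by positivity), mul_comm]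
  rw [← Finset.sum_subset (Finset.range_subset_range.mpr hMlt)
    (fun n _ hn => by
      rw [if_neg]
      rw [hcond n]
      simp only [Finset.mem_range] at hn
      omega)]
  rw [Finset.sum_congr rfl (fun n hn => by
    rw [if_pos]
    rw [hcond n]
    simp only [Finset.mem_range] at hn
    omega)]
  rw [tele_aux μ _ hq (⌊(N : ℝ) ^ k * x⌋₊ + 1)]
  push_cast
  ring_nf


theorem stmt_9 {N : ℕ} (hN : 2 ≤ N) (S : Fin N → H →L[ℂ] H) (hS : CuntzRep S)
    (f : H) (hf : ‖f‖ = 1)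
    (μ : Measure ℝ) (hμ : IsSpectralMeasureR S f μ) :
    ∀ x ∈ Set.Ico (0:ℝ) 1,
      Filter.Tendsto (fun k : ℕ => muk S f k (Set.Icc (0:ℝ) x))
        Filter.atTop (nhds (μ (Set.Icc (0:ℝ) x))) := by
  rintro x ⟨hx0, hx1⟩
  have hNR : (1:ℝ) < N := by exact_mod_cast hN.trans_lt' one_lt_two
  have hq : ∀ k : ℕ, (0:ℝ) < (N : ℝ) ^ k := fun k => by positivity
  have hfin : IsFiniteMeasure μ := ⟨by rw [hμ.2.1]; exact ENNReal.ofReal_lt_top⟩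
  set g : ℕ → ℝ := fun k => ((⌊(N : ℝ) ^ k * x⌋₊ : ℝ) + 1) / (N : ℝ) ^ k with hg
  have hgx : ∀ k, x < g k := by
    intro k
    rw [lt_div_iff₀ (hq k), mul_comm]
    exact Nat.lt_floor_add_one _
  have hgle : ∀ k, g k ≤ x + ((N : ℝ) ^ k)⁻¹ := by
    intro k
    rw [div_le_iff₀ (hq k)]
    have h1 : (⌊(N : ℝ) ^ k * x⌋₊ : ℝ) ≤ (N : ℝ) ^ k * x := Nat.floor_le (by positivity)
    have h2 : (x + ((N : ℝ) ^ k)⁻¹) * (N : ℝ) ^ k = (N : ℝ) ^ k * x + 1 := by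
      field_simp
    linarith
  -- the Ioc sets shrink to ∅
  have hanti : Antitone (fun k : ℕ => Set.Ioc x (x + ((N : ℝ) ^ k)⁻¹)) := by
    intro k l hkl
    apply Set.Ioc_subset_Ioc le_rfl
    have : (N : ℝ) ^ k ≤ (N : ℝ) ^ l := pow_le_pow_right₀ (le_of_lt hNR) hkl
    gcongr
  have hiInter : ⋂ k : ℕ, Set.Ioc x (x + ((N : ℝ) ^ k)⁻¹) = ∅ := by
    ext y
    simp only [Set.mem_iInter, Set.mem_Ioc, Set.mem_empty_iff_false, iff_false, not_forall]
    by_cases hy : x < y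
    · obtain ⟨k, hk⟩ := pow_unbounded_of_one_lt ((y - x)⁻¹) hNR
      refine ⟨k, ?_⟩
      rw [not_and_or]
      right
      push_neg
      have hyx : 0 < y - x := by linarith
      have : ((N : ℝ) ^ k)⁻¹ < y - x := by
        have := inv_strictAnti₀ (inv_pos.mpr hyx) hk
        rwa [inv_inv] at this
      linarith
    · exact ⟨0, fun h => absurd h.1 hy⟩
  have hB : Filter.Tendsto (fun k : ℕ => μ (Set.Ioc x (x + ((N : ℝ) ^ k)⁻¹)))
      Filter.atTop (nhds 0) := by
    have := tendsto_measure_iInter_atTop (μ := μ)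
      (s := fun k : ℕ => Set.Ioc x (x + ((N : ℝ) ^ k)⁻¹))
      (fun k => measurableSet_Ioc.nullMeasurableSet) hanti ⟨0, measure_ne_top μ _⟩
    rwa [hiInter, measure_empty] at this
  have hIoo : Filter.Tendsto (fun k : ℕ => μ (Set.Ioo x (g k))) Filter.atTop (nhds 0) := by
    apply tendsto_of_tendsto_of_tendsto_of_le_of_le tendsto_const_nhds hB
      (fun k => zero_le)
    intro k
    exact measure_mono ((Set.Ioo_subset_Ioc_self).trans (Set.Ioc_subset_Ioc_right (hgle k)))
  have hdecomp : ∀ k : ℕ, μ (Set.Ico (0:ℝ) (g k))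
      = μ (Set.Icc (0:ℝ) x) + μ (Set.Ioo x (g k)) := by
    intro k
    rw [← Set.Icc_union_Ioo_eq_Ico hx0 (hgx k),
      measure_union ((Set.Iic_disjoint_Ioi le_rfl).mono Set.Icc_subset_Iic_self
        Set.Ioo_subset_Ioi_self) measurableSet_Ioo]
  have hmain : Filter.Tendsto (fun k : ℕ => μ (Set.Ico (0:ℝ) (g k)))
      Filter.atTop (nhds (μ (Set.Icc (0:ℝ) x))) := by
    have h := Filter.Tendsto.const_add (μ (Set.Icc (0:ℝ) x)) hIoo
    rw [add_zero] at h
    exact h.congr (fun k => (hdecomp k).symm)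
  apply hmain.congr'
  filter_upwards [Filter.eventually_ge_atTop 1] with k hk
  exact (muk_apply_eq hN S f μ hμ hx0 hx1 hk).symm
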